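/- arXiv:2409.08586 — 3 statements merged into one kernel-verified Lean document; each statement's English description precedes it below -/
import Mathlib

section
/- Let q and r be distinct primes and let G be a primitive subgroup of S_n lying in the variety 𝔄_q𝔄_r with |G| = q^β r^γ where β ≥ 1 and γ ≥ 1. If M is a minimal normal subgroup of G, then |M| = q^β = n, β equals the multiplicative order of q modulo r, G is a semidirect product M ⋊ C_r, and |G| = nr < n². -/
open Polynomial in
lemma aqar_ring_aux {q r β γ : ℕ} (hq : q.Prime) (hr : r.Prime) (hqr : q ≠ r)
    (hβ : 1 ≤ β) (hγ : 1 ≤ γ)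
    (V : Type) [AddCommGroup V] [Finite V] (hV : ∀ v : V, q • v = 0)
    (hcardV : Nat.card V = q ^ β)
    (H : Type) [Group H] (hHcomm : ∀ a b : H, a * b = b * a)
    (hcardH : Nat.card H = r ^ γ) (hHexp : ∀ h : H, h ^ r = 1)
    (ρ : H →* AddMonoid.End V) (hinj : Function.Injective ρ)
    (hsimple : ∀ W : AddSubgroup V, (∀ (h : H) (x : V), x ∈ W → ρ h x ∈ W) → W = ⊥ ∨ W = ⊤) :
    γ = 1 ∧ β = orderOf (q : ZMod r) ∧ r < q ^ β := by
  haveI : Fact q.Prime := ⟨hq⟩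
  haveI : Fact r.Prime := ⟨hr⟩
  have hq2 : 2 ≤ q := hq.two_le
  have hqβ2 : 2 ≤ q ^ β := le_trans hq2 (Nat.le_self_pow (by omega) q)
  haveI : Finite V := ‹_›
  haveI : Nontrivial V := Finite.one_lt_card_iff_nontrivial.mp (by omega)
  haveI : Finite (AddMonoid.End V) := FunLike.finite _
  set A : Subring (AddMonoid.End V) := Subring.closure (Set.range ρ) with hA
  -- commutativity
  have hcent1 : A ≤ Subring.centralizer (Set.range ρ) := by
    rw [hA, Subring.closure_le]
    rintro x ⟨a, rfl⟩
    rw [SetLike.mem_coe, Subring.mem_centralizer_iff]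
    rintro y ⟨b, rfl⟩
    rw [← map_mul, ← map_mul, hHcomm]
  have hAcomm : ∀ x ∈ A, ∀ y ∈ A, x * y = y * x := by
    have h2 : A ≤ Subring.centralizer (A : Set (AddMonoid.End V)) := by
      rw [hA, Subring.closure_le]
      rintro x ⟨a, rfl⟩
      rw [SetLike.mem_coe, Subring.mem_centralizer_iff]
      intro y hy
      exact (hcent1 hy _ ⟨a, rfl⟩).symm
    intro x hx y hy
    exact Subring.mem_centralizer_iff.mp (h2 hy) x hx
  have hmemA : ∀ h : H, ρ h ∈ A := fun h => Subring.subset_closure ⟨h, rfl⟩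
  -- kernels
  have hker : ∀ a : AddMonoid.End V, a ∈ A → a ≠ 0 → Function.Injective a := by
    intro a ha h0
    have := hsimple a.ker ?_
    · rcases this with hbot | htop
      · exact (AddMonoidHom.ker_eq_bot_iff _).mp hbot
      · exfalso; apply h0
        apply AddMonoidHom.ext
        intro v
        have : v ∈ a.ker := htop ▸ AddSubgroup.mem_top v
        exact (AddMonoidHom.mem_ker.mp this).trans rfl
    · intro h x hx
      change a x = 0 at hx; change a ((ρ h) x) = 0
      have : a ((ρ h) x) = (ρ h) (a x) := by
        have hcomm := hAcomm a ha (ρ h) (hmemA h)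
        calc a ((ρ h) x) = (a * ρ h) x := rfl
          _ = (ρ h * a) x := by rw [hcomm]
          _ = (ρ h) (a x) := rfl
      rw [this, hx, map_zero]
  -- the evaluation map A → V is bijective
  obtain ⟨v0, hv0⟩ := exists_ne (0 : V)
  let Φ : A →+ V :=
    { toFun := fun a => (a : AddMonoid.End V) v0
      map_zero' := rfl
      map_add' := fun a b => rfl }
  have hΦinj : Function.Injective Φ := by
    intro a b hab
    have hsub : ((a - b : A) : AddMonoid.End V) v0 = 0 := by
      have : ((a - b : A) : AddMonoid.End V) = (a : AddMonoid.End V) - b := rfl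
      rw [this]; change (a : AddMonoid.End V) v0 - (b : AddMonoid.End V) v0 = 0; rw [sub_eq_zero]
      exact hab
    by_cases hc : ((a - b : A) : AddMonoid.End V) = 0
    · have : (a - b : A) = 0 := Subtype.ext hc
      rwa [sub_eq_zero] at this
    · exfalso
      have hinj' := hker _ (a - b).2 hc
      exact hv0 (hinj' (by rw [hsub, map_zero]))
  have hΦsurj : Function.Surjective Φ := by
    have := hsimple Φ.range ?_
    · rcases this with hbot | htop
      · exfalso
        have : Φ 1 ∈ Φ.range := ⟨1, rfl⟩
        rw [hbot] at this
        simp only [AddSubgroup.mem_bot] at this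
        exact hv0 this
      · intro v
        have : v ∈ Φ.range := htop ▸ AddSubgroup.mem_top v
        exact this
    · rintro h x ⟨a, rfl⟩
      refine ⟨⟨ρ h, hmemA h⟩ * a, ?_⟩
      rfl
  have hcardA : Nat.card A = q ^ β := by
    rw [← hcardV]
    exact Nat.card_eq_of_bijective Φ ⟨hΦinj, hΦsurj⟩
  haveI : Finite A := Subtype.finite
  -- A is a commutative domain, hence a field
  letI instCR : CommRing A :=
    { (inferInstance : Ring A) with
      mul_comm := fun a b => Subtype.ext (hAcomm _ a.2 _ b.2) }
  haveI : Nontrivial A := by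
    refine ⟨1, 0, fun h01 => ?_⟩
    have : (1 : AddMonoid.End V) v0 = (0 : AddMonoid.End V) v0 := by
      rw [show (1 : AddMonoid.End V) = ((1 : A) : AddMonoid.End V) from rfl, h01]; rfl
    simp only [AddMonoid.End.one_apply, AddMonoid.End.zero_apply] at this
    exact hv0 this
  haveI : NoZeroDivisors A := by
    constructor
    intro a b hab
    by_contra hne
    push_neg at hne
    obtain ⟨ha0, hb0⟩ := hne
    have hai := hker _ a.2 (fun h => ha0 (Subtype.ext h))
    have hbi := hker _ b.2 (fun h => hb0 (Subtype.ext h))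
    have : ((a * b : A) : AddMonoid.End V) = 0 := by rw [hab]; rfl
    have h1 : (a : AddMonoid.End V) ((b : AddMonoid.End V) v0) = 0 := by
      have := congrArg (fun f : AddMonoid.End V => f v0) this
      exact this
    have h2 : (b : AddMonoid.End V) v0 = 0 := hai (by rw [h1, map_zero])
    exact hv0 (hbi (by rw [h2, map_zero]))
  haveI : IsDomain A := NoZeroDivisors.to_isDomain A
  letI instF : Field A := (Finite.isField_of_domain A).toField
  -- the map H →* Aˣ
  let ρA : H →* A :=
    { toFun := fun h => ⟨ρ h, hmemA h⟩
      map_one' := Subtype.ext (map_one ρ)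
      map_mul' := fun a b => Subtype.ext (map_mul ρ a b) }
  let φ : H →* Aˣ := ρA.toHomUnits
  have hφinj : Function.Injective φ := by
    rw [injective_iff_map_eq_one]
    intro h hh
    apply hinj
    rw [map_one]
    have : ((φ h : A) : AddMonoid.End V) = ρ h := rfl
    rw [← this, hh]
    rfl
  -- H is cyclic, hence of order r
  haveI : IsCyclic Aˣ := inferInstance
  haveI hcyc : IsCyclic H := by
    have e : H ≃* φ.range := MonoidHom.ofInjective hφinj
    exact isCyclic_of_surjective e.symm.toMonoidHom e.symm.surjective
  haveI : Finite H := Nat.finite_of_card_ne_zero (by rw [hcardH]; exact (pow_pos hr.pos γ).ne')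
  obtain ⟨g, hg⟩ := IsCyclic.exists_generator (α := H)
  have horder : orderOf g = r ^ γ := by
    rw [← hcardH]; exact orderOf_eq_card_of_forall_mem_zpowers hg
  have hγ1 : γ = 1 := by
    have h1 : orderOf g ∣ r := orderOf_dvd_of_pow_eq_one (hHexp g)
    rw [horder] at h1
    have h2 : r ^ γ ∣ r ^ 1 := by simpa using h1
    have := (Nat.pow_dvd_pow_iff_le_right hr.one_lt).mp h2
    omega
  -- the element ζ = φ g has order r in Aˣ
  have hcardH' : Nat.card H = r := by rw [hcardH, hγ1, pow_one]
  have hζord : orderOf (φ g) = r := by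
    rw [orderOf_injective φ hφinj, horder, hγ1, pow_one]
  have hrdvd : r ∣ q ^ β - 1 := by
    have h1 : orderOf (φ g) ∣ Nat.card Aˣ := orderOf_dvd_natCard _
    rw [hζord, Nat.card_units, hcardA] at h1
    exact h1
  have hrlt : r < q ^ β := by
    have h1 : 0 < q ^ β - 1 := by omega
    have := Nat.le_of_dvd h1 hrdvd
    omega
  -- facts about d = orderOf (q : ZMod r)
  haveI : NeZero r := ⟨hr.pos.ne'⟩
  set d := orderOf (q : ZMod r) with hd
  have hqbar0 : (q : ZMod r) ≠ 0 := by
    rw [Ne, ZMod.natCast_eq_zero_iff]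
    intro hdvd
    exact hqr ((Nat.prime_dvd_prime_iff_eq hr hq).mp hdvd).symm
  have hfin : (q : ZMod r) ^ (r - 1) = 1 := ZMod.pow_card_sub_one_eq_one hqbar0
  have hdpos : 0 < d := by
    apply IsOfFinOrder.orderOf_pos
    exact isOfFinOrder_iff_pow_eq_one.mpr ⟨r - 1, by have := hr.two_le; omega, hfin⟩
  have hmodeq : q ^ β ≡ 1 [MOD r] := by
    have h1 : 1 ≤ q ^ β := by omega
    exact ((Nat.modEq_iff_dvd' h1).mpr hrdvd).symm
  have hpow1 : (q : ZMod r) ^ β = 1 := by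
    have h2 := (ZMod.natCast_eq_natCast_iff _ _ _).mpr hmodeq
    push_cast at h2
    exact h2
  have hddvd : d ∣ β := orderOf_dvd_of_pow_eq_one hpow1
  have hqd : q ^ d % r = 1 := by
    have h1 : (q : ZMod r) ^ d = 1 := pow_orderOf_eq_one _
    have h2 : ((q ^ d : ℕ) : ZMod r) = ((1 : ℕ) : ZMod r) := by push_cast; exact h1
    have h3 := (ZMod.natCast_eq_natCast_iff _ _ _).mp h2
    have h4 : 1 % r = 1 := Nat.mod_eq_of_lt hr.one_lt
    unfold Nat.ModEq at h3
    rwa [h4] at h3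
  -- CharP A q
  have hqA : ((q : ℕ) : A) = 0 := by
    apply Subtype.ext
    have h1 : (((q : ℕ) : A) : AddMonoid.End V) = ((q : ℕ) : AddMonoid.End V) :=
      map_natCast A.subtype q
    rw [h1]
    show ((q : ℕ) : AddMonoid.End V) = ((0 : A) : AddMonoid.End V)
    apply AddMonoidHom.ext; intro v
    show q • v = _
    exact (hV v).trans rfl
  haveI : CharP A q := (CharP.charP_iff_prime_eq_zero hq).mpr hqA
  have hqd2 : 2 ≤ q ^ d := le_trans hq2 (Nat.le_self_pow hdpos.ne' q)
  let S : Subring A :=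
    { carrier := {x : A | x ^ q ^ d = x}
      zero_mem' := by simp only [Set.mem_setOf_eq]; rw [zero_pow (by omega : q ^ d ≠ 0)]
      one_mem' := by simp only [Set.mem_setOf_eq]; rw [one_pow]
      add_mem' := by
        intro x y hx hy
        simp only [Set.mem_setOf_eq] at *
        rw [add_pow_char_pow, hx, hy]
      neg_mem' := by
        intro x hx
        simp only [Set.mem_setOf_eq] at *
        have h5 : (-x) ^ q ^ d = (0 - x) ^ q ^ d := by rw [zero_sub]
        rw [h5, sub_pow_char_pow, hx, zero_pow (by omega : q ^ d ≠ 0), zero_sub]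
      mul_mem' := by
        intro x y hx hy
        simp only [Set.mem_setOf_eq] at *
        rw [mul_pow, hx, hy] }
  have hgenS : ∀ h : H, (⟨ρ h, hmemA h⟩ : A) ∈ S := by
    intro h
    set x : A := ⟨ρ h, hmemA h⟩ with hx
    have hxr : x ^ r = 1 := by
      apply Subtype.ext
      rw [SubmonoidClass.coe_pow]
      show (ρ h) ^ r = ((1 : A) : AddMonoid.End V)
      rw [← map_pow, hHexp, map_one, OneMemClass.coe_one]
    show x ^ q ^ d = x
    have h6 := Nat.div_add_mod (q ^ d) r
    rw [hqd] at h6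
    have h7 : q ^ d = r * (q ^ d / r) + 1 := by omega
    rw [h7, pow_add, pow_mul, hxr, one_pow, one_mul, pow_one]
  have hallS : ∀ x : A, x ^ q ^ d = x := by
    intro x
    have hxA : (x : AddMonoid.End V) ∈ A := x.2
    have hsub : A ≤ S.map A.subtype :=
      Subring.closure_le.mpr (by rintro y ⟨h, rfl⟩; exact ⟨⟨ρ h, hmemA h⟩, hgenS h, rfl⟩)
    obtain ⟨y, hy, hyx⟩ := hsub hxA
    have h8 : y = x := Subtype.ext hyx
    rw [← h8]
    exact hy
  haveI : Fintype A := Fintype.ofFinite A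
  have hcount : Fintype.card A ≤ q ^ d := by
    classical
    set p : Polynomial A := Polynomial.X ^ q ^ d - Polynomial.X with hp
    have hdeg : p.natDegree = q ^ d := by
      rw [hp, Polynomial.natDegree_sub_eq_left_of_natDegree_lt, Polynomial.natDegree_X_pow]
      rw [Polynomial.natDegree_X_pow, Polynomial.natDegree_X]
      omega
    have hpne : p ≠ 0 := by
      intro h
      rw [h, Polynomial.natDegree_zero] at hdeg
      omega
    have hroots : ∀ x : A, x ∈ p.roots := by
      intro x
      rw [Polynomial.mem_roots hpne]
      show Polynomial.IsRoot p x
      rw [hp]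
      simp only [Polynomial.IsRoot, Polynomial.eval_sub, Polynomial.eval_pow, Polynomial.eval_X]
      rw [hallS x, sub_self]
    calc Fintype.card A = (Finset.univ : Finset A).card := rfl
      _ ≤ p.roots.toFinset.card :=
          Finset.card_le_card (fun x _ => Multiset.mem_toFinset.mpr (hroots x))
      _ ≤ Multiset.card p.roots := Multiset.toFinset_card_le _
      _ ≤ p.natDegree := Polynomial.card_roots' p
      _ = q ^ d := hdeg
  have hβled : β ≤ d := by
    have h1 : q ^ β ≤ q ^ d := by
      rw [← hcardA, Nat.card_eq_fintype_card]
      exact hcount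
    exact (Nat.pow_le_pow_iff_right hq.one_lt).mp h1
  have hβd : β = d := le_antisymm hβled (Nat.le_of_dvd (by omega) hddvd)
  exact ⟨hγ1, hβd, hrlt⟩

/-- A subgroup of the symmetric group on `Fin n` is primitive if it is transitive
and every block of its action is trivial. -/
def IsPrimitiveSubgroup {n : ℕ} (G : Subgroup (Equiv.Perm (Fin n))) : Prop :=
  MulAction.IsPretransitive G (Fin n) ∧
    ∀ B : Set (Fin n), MulAction.IsBlock G B → B.Subsingleton ∨ B = Set.univ

/-- A group lies in the variety 𝔄_r: abelian of exponent dividing r. -/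
def InAr (r : ℕ) (G : Type*) [Group G] : Prop :=
  (∀ a b : G, a * b = b * a) ∧ ∀ a : G, a ^ r = 1

/-- A group lies in the variety 𝔄_q𝔄_r: there is an abelian normal subgroup of
exponent dividing q with abelian quotient of exponent dividing r. -/
def InAqAr (q r : ℕ) (G : Type*) [Group G] : Prop :=
  ∃ N : Subgroup G, N.Normal ∧ (∀ a ∈ N, ∀ b ∈ N, a * b = b * a) ∧
    (∀ a ∈ N, a ^ q = 1) ∧ (∀ a b : G, a * b * a⁻¹ * b⁻¹ ∈ N) ∧ (∀ a : G, a ^ r ∈ N)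

/-- Theorem B(ii): structure of a primitive subgroup of S_n lying in 𝔄_q𝔄_r
with order q^β r^γ, β ≥ 1, γ ≥ 1. -/
theorem primitive_AqAr_structure (q r n β γ : ℕ) (hq : q.Prime) (hr : r.Prime)
    (hqr : q ≠ r) (hβ : 1 ≤ β) (hγ : 1 ≤ γ)
    (G : Subgroup (Equiv.Perm (Fin n))) (hprim : IsPrimitiveSubgroup G)
    (hvar : InAqAr q r G) (hcard : Nat.card G = q ^ β * r ^ γ)
    (M : Subgroup G) (hMnormal : M.Normal) (hMne : M ≠ ⊥)
    (hMmin : ∀ N : Subgroup G, N.Normal → N ≠ ⊥ → N ≤ M → N = M) :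
    Nat.card M = q ^ β ∧ q ^ β = n ∧ β = orderOf (q : ZMod r) ∧
      (∃ H : Subgroup G, Nat.card H = r ∧ M ⊓ H = ⊥ ∧ M ⊔ H = ⊤) ∧
      Nat.card G = n * r ∧ n * r < n ^ 2 := by
  obtain ⟨htrans, hblocks⟩ := hprim
  obtain ⟨N, hNnorm, hNcomm, hNexp, hNcomm2, hNpow⟩ := hvar
  haveI : Fact q.Prime := ⟨hq⟩
  haveI : Fact r.Prime := ⟨hr⟩
  haveI := hMnormal
  haveI := hNnorm
  have hq2 : 2 ≤ q := hq.two_le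
  have hr2 : 2 ≤ r := hr.two_le
  have hqβ2 : 2 ≤ q ^ β := le_trans hq2 (Nat.le_self_pow (by omega) q)
  have hrγ1 : 1 ≤ r ^ γ := Nat.one_le_pow _ _ hr.pos
  have hcardG1 : 1 < Nat.card G := by
    rw [hcard]
    calc 1 < 2 := one_lt_two
      _ ≤ q ^ β * r ^ γ := le_trans hqβ2 (Nat.le_mul_of_pos_right _ (by omega))
  -- faithfulness
  have hfaith : ∀ g : G, (∀ a : Fin n, g • a = a) → g = 1 := by
    intro g hg
    exact Subtype.ext (Equiv.ext fun a => hg a)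
  haveI : Nontrivial G := Finite.one_lt_card_iff_nontrivial.mp hcardG1
  obtain ⟨g0, hg0⟩ := exists_ne (1 : G)
  have hnemp : Nonempty (Fin n) := by
    by_contra h
    exact hg0 (hfaith g0 (fun a => ((not_nonempty_iff.mp h).false a).elim))
  obtain ⟨α⟩ := hnemp
  -- cardinalities of N and G/N
  have hNpgroup : IsPGroup q N := by
    intro x
    exact ⟨1, by
      rw [pow_one]
      apply Subtype.ext
      rw [SubgroupClass.coe_pow]
      exact hNexp x.1 x.2⟩
  have hQpgroup : IsPGroup r (G ⧸ N) := by
    intro x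
    refine ⟨1, ?_⟩
    rw [pow_one]
    induction x using QuotientGroup.induction_on with
    | H g =>
      rw [← QuotientGroup.mk_pow, QuotientGroup.eq_one_iff]
      exact hNpow g
  obtain ⟨a₀, hNcard⟩ := hNpgroup.exists_card_eq
  obtain ⟨b₀, hQcard⟩ := hQpgroup.exists_card_eq
  have hprodcard : q ^ a₀ * r ^ b₀ = q ^ β * r ^ γ := by
    rw [← hNcard, ← hQcard, ← hcard, Subgroup.card_eq_card_quotient_mul_card_subgroup N,
      mul_comm]
  have hfactq : ∀ x y : ℕ, (q ^ x * r ^ y).factorization q = x := by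
    intro x y
    rw [Nat.factorization_mul (pow_ne_zero _ hq.pos.ne') (pow_ne_zero _ hr.pos.ne'),
      hq.factorization_pow, hr.factorization_pow]
    simp [Finsupp.single_apply, Ne.symm hqr]
  have hfactr : ∀ x y : ℕ, (q ^ x * r ^ y).factorization r = y := by
    intro x y
    rw [Nat.factorization_mul (pow_ne_zero _ hq.pos.ne') (pow_ne_zero _ hr.pos.ne'),
      hq.factorization_pow, hr.factorization_pow]
    simp [Finsupp.single_apply, hqr]
  have ha0 : a₀ = β := by
    have h1 := congrArg (fun m => m.factorization q) hprodcard
    simpa [hfactq] using h1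
  have hb0 : b₀ = γ := by
    have h1 := congrArg (fun m => m.factorization r) hprodcard
    simpa [hfactr] using h1
  have hNcardβ : Nat.card N = q ^ β := by rw [hNcard, ha0]
  -- M is transitive
  have hMtrans : ∀ x y : Fin n, ∃ m : G, m ∈ M ∧ m • x = y := by
    have hblk : ∀ a : Fin n, (MulAction.orbit M a).Subsingleton ∨ MulAction.orbit M a = Set.univ :=
      fun a => hblocks _ (MulAction.IsBlock.orbit_of_normal a)
    by_cases hall : ∀ a : Fin n, (MulAction.orbit M a).Subsingleton
    · exfalso
      apply hMne
      ext m
      rw [Subgroup.mem_bot]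
      constructor
      · intro hm
        apply hfaith
        intro a
        exact hall a (MulAction.mem_orbit a (⟨m, hm⟩ : M)) (MulAction.mem_orbit_self a)
      · rintro rfl; exact M.one_mem
    · push_neg at hall
      obtain ⟨a, ha⟩ := hall
      have huniv : MulAction.orbit M a = Set.univ := (hblk a).resolve_left ha.not_subsingleton
      intro x y
      have hx : x ∈ MulAction.orbit M a := huniv ▸ Set.mem_univ x
      have hy : y ∈ MulAction.orbit M a := huniv ▸ Set.mem_univ y
      obtain ⟨mx, hmx⟩ := hx
      obtain ⟨my, hmy⟩ := hy
      have hmx' : (mx : G) • a = x := hmx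
      have hmy' : (my : G) • a = y := hmy
      refine ⟨(my : G) * (mx : G)⁻¹, mul_mem my.2 (inv_mem mx.2), ?_⟩
      rw [mul_smul, ← hmx', inv_smul_smul]
      exact hmy'
  -- anything commuting with all of M lies in M (when M is abelian)
  have hMcent : (∀ a ∈ M, ∀ b ∈ M, a * b = b * a) →
      ∀ x : G, (∀ m ∈ M, x * m = m * x) → x ∈ M := by
    intro Mab x hx
    obtain ⟨m, hmM, hm⟩ := hMtrans α (x • α)
    have hy : ∀ b : Fin n, (m⁻¹ * x) • b = b := by
      intro b
      obtain ⟨m', hm'M, hm'⟩ := hMtrans α b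
      have hcomm : (m⁻¹ * x) * m' = m' * (m⁻¹ * x) := by
        have h1 := hx m' hm'M
        have h2 := Mab m hmM m' hm'M
        have h2' : m⁻¹ * m' = m' * m⁻¹ := ((show Commute m m' from h2).inv_left).eq
        calc (m⁻¹ * x) * m' = m⁻¹ * (x * m') := by rw [mul_assoc]
          _ = m⁻¹ * (m' * x) := by rw [h1]
          _ = (m⁻¹ * m') * x := by rw [mul_assoc]
          _ = (m' * m⁻¹) * x := by rw [h2']
          _ = m' * (m⁻¹ * x) := by rw [mul_assoc]
      calc (m⁻¹ * x) • b = (m⁻¹ * x) • (m' • α) := by rw [hm']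
        _ = ((m⁻¹ * x) * m') • α := (mul_smul _ _ _).symm
        _ = (m' * (m⁻¹ * x)) • α := by rw [hcomm]
        _ = m' • ((m⁻¹ * x) • α) := mul_smul _ _ _
        _ = m' • (m⁻¹ • (x • α)) := by rw [mul_smul]
        _ = m' • (m⁻¹ • (m • α)) := by rw [hm]
        _ = m' • α := by rw [inv_smul_smul]
        _ = b := hm'
    have h3 : m⁻¹ * x = 1 := hfaith _ hy
    have h4 : x = m := by
      have := congrArg (fun z => m * z) h3
      simpa [← mul_assoc] using this
    rw [h4]; exact hmM
  -- M = N
  haveI hMNnormal : (M ⊓ N).Normal :=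
    ⟨fun x hx g => ⟨hMnormal.conj_mem x hx.1 g, hNnorm.conj_mem x hx.2 g⟩⟩
  have commutator_eq_one : ∀ a b : G, a * b * a⁻¹ * b⁻¹ = 1 → a * b = b * a := by
    intro a b h1
    have h2 : a * b * a⁻¹ = b := by rwa [mul_inv_eq_one] at h1
    calc a * b = (a * b * a⁻¹) * a := by group
      _ = b * a := by rw [h2]
  have hMeqN : M = N := by
    by_cases hint : M ⊓ N = ⊥
    · exfalso
      have Mab : ∀ a ∈ M, ∀ b ∈ M, a * b = b * a := by
        intro a ha b hb
        have h1 : a * b * a⁻¹ * b⁻¹ ∈ M ⊓ N :=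
          Subgroup.mem_inf.mpr
            ⟨mul_mem (mul_mem (mul_mem ha hb) (inv_mem ha)) (inv_mem hb), hNcomm2 a b⟩
        rw [hint, Subgroup.mem_bot] at h1
        exact commutator_eq_one a b h1
      have hNM : N ≤ M := by
        intro x hx
        apply hMcent Mab x
        intro m hm
        have h1 : x * m * x⁻¹ * m⁻¹ ∈ M ⊓ N :=
          Subgroup.mem_inf.mpr
            ⟨mul_mem (hMnormal.conj_mem m hm x) (inv_mem hm), hNcomm2 x m⟩
        rw [hint, Subgroup.mem_bot] at h1
        exact commutator_eq_one x m h1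
      have hNbot : N = ⊥ := by
        rw [← le_bot_iff, ← hint]
        exact le_inf hNM le_rfl
      rw [hNbot, Subgroup.card_bot] at hNcardβ
      omega
    · have hMN : M ≤ N := by
        have h1 := hMmin (M ⊓ N) hMNnormal hint inf_le_left
        exact inf_eq_left.mp h1
      have Mab : ∀ a ∈ M, ∀ b ∈ M, a * b = b * a := fun a ha b hb =>
        hNcomm a (hMN ha) b (hMN hb)
      have hNM : N ≤ M := fun x hx =>
        hMcent Mab x (fun m hm => hNcomm x hx m (hMN hm))
      exact le_antisymm hMN hNM
  have Mab : ∀ a ∈ M, ∀ b ∈ M, a * b = b * a := fun a ha b hb =>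
    hNcomm a (hMeqN ▸ ha) b (hMeqN ▸ hb)
  have hMcardβ : Nat.card M = q ^ β := by rw [hMeqN]; exact hNcardβ
  -- stabilizer of a point in M is trivial
  have hstab : ∀ m ∈ M, m • α = α → m = 1 := by
    intro m hm hfix
    apply hfaith
    intro b
    obtain ⟨m', hm'M, hm'⟩ := hMtrans α b
    calc m • b = m • (m' • α) := by rw [hm']
      _ = (m * m') • α := (mul_smul _ _ _).symm
      _ = (m' * m) • α := by rw [Mab m hm m' hm'M]
      _ = m' • (m • α) := mul_smul _ _ _
      _ = m' • α := by rw [hfix]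
      _ = b := hm'
  -- |M| = n
  have hMcardn : Nat.card M = n := by
    have hbij : Function.Bijective (fun m : M => (m : G) • α) := by
      constructor
      · intro m1 m2 h12
        have h12' : (m1 : G) • α = (m2 : G) • α := h12
        have h1 : ((m2 : G)⁻¹ * (m1 : G)) • α = α := by
          rw [mul_smul, h12', inv_smul_smul]
        have h2 := hstab _ (mul_mem (inv_mem m2.2) m1.2) h1
        have h3 : (m1 : G) = (m2 : G) := by
          have := congrArg (fun z => (m2 : G) * z) h2
          simpa [← mul_assoc] using this
        exact Subtype.ext h3
      · intro b
        obtain ⟨m, hm, hmb⟩ := hMtrans α b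
        exact ⟨⟨m, hm⟩, hmb⟩
    have := Nat.card_eq_of_bijective _ hbij
    rw [this, Nat.card_eq_fintype_card, Fintype.card_fin]
  -- the stabilizer H
  set H : Subgroup G := MulAction.stabilizer G α with hHdef
  have hMH : M ⊓ H = ⊥ := by
    ext x
    rw [Subgroup.mem_inf, Subgroup.mem_bot]
    constructor
    · rintro ⟨hxM, hxH⟩
      exact hstab x hxM (MulAction.mem_stabilizer_iff.mp hxH)
    · rintro rfl
      exact ⟨M.one_mem, H.one_mem⟩
  have hfactor : ∀ g : G, ∃ m h : G, m ∈ M ∧ h ∈ H ∧ g = m * h := by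
    intro g
    obtain ⟨m, hm, hma⟩ := hMtrans α (g • α)
    refine ⟨m, m⁻¹ * g, hm, ?_, by group⟩
    rw [hHdef, MulAction.mem_stabilizer_iff, mul_smul, ← hma, inv_smul_smul]
  have hsup : M ⊔ H = ⊤ := by
    rw [eq_top_iff]
    intro g _
    obtain ⟨m, h, hm, hh, rfl⟩ := hfactor g
    exact mul_mem (Subgroup.mem_sup_left hm) (Subgroup.mem_sup_right hh)
  have hGMH : Nat.card G = Nat.card M * Nat.card H := by
    have hbij : Function.Bijective (fun p : M × H => (p.1 : G) * (p.2 : G)) := by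
      constructor
      · rintro ⟨m1, h1⟩ ⟨m2, h2⟩ h12
        have h12' : (m1 : G) * h1 = (m2 : G) * h2 := h12
        have hkey : (m2 : G)⁻¹ * (m1 : G) = (h2 : G) * (h1 : G)⁻¹ := by
          have h3 : ((m2 : G)⁻¹ * (m1 : G)) * (h1 : G) = h2 := by
            rw [mul_assoc, h12']; group
          rw [← h3]; group
        have hmem : ((m2 : G)⁻¹ * m1) ∈ M ⊓ H := by
          rw [Subgroup.mem_inf]
          constructor
          · exact mul_mem (inv_mem m2.2) m1.2
          · rw [hkey]; exact mul_mem h2.2 (inv_mem h1.2)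
        rw [hMH, Subgroup.mem_bot] at hmem
        have hm12 : (m1 : G) = m2 := by
          have := congrArg (fun z => (m2 : G) * z) hmem
          simpa [← mul_assoc] using this
        have hh12 : (h1 : G) = h2 := by
          have h5 : (h2 : G) * (h1 : G)⁻¹ = 1 := by rw [← hkey, hmem]
          exact (mul_inv_eq_one.mp h5).symm
        simp only [Prod.mk.injEq]
        exact ⟨Subtype.ext hm12, Subtype.ext hh12⟩
      · intro g
        obtain ⟨m, h, hm, hh, rfl⟩ := hfactor g
        exact ⟨(⟨m, hm⟩, ⟨h, hh⟩), rfl⟩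
    have h7 := Nat.card_eq_of_bijective _ hbij
    rw [← h7, Nat.card_prod]
  have hHcard : Nat.card H = r ^ γ := by
    have h1 : q ^ β * r ^ γ = q ^ β * Nat.card H := by
      rw [← hcard, hGMH, hMcardβ]
    exact (Nat.eq_of_mul_eq_mul_left (by omega) h1).symm
  -- H is abelian of exponent r
  have hHab : ∀ a ∈ H, ∀ b ∈ H, a * b = b * a := by
    intro a ha b hb
    have h1 : a * b * a⁻¹ * b⁻¹ ∈ M ⊓ H := by
      rw [Subgroup.mem_inf]
      constructor
      · rw [hMeqN]; exact hNcomm2 a b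
      · exact mul_mem (mul_mem (mul_mem ha hb) (inv_mem ha)) (inv_mem hb)
    rw [hMH, Subgroup.mem_bot] at h1
    exact commutator_eq_one a b h1
  have hHr : ∀ a ∈ H, a ^ r = 1 := by
    intro a ha
    have h1 : a ^ r ∈ M ⊓ H := by
      rw [Subgroup.mem_inf]
      exact ⟨by rw [hMeqN]; exact hNpow a, pow_mem ha r⟩
    rwa [hMH, Subgroup.mem_bot] at h1
  -- set up the module structure on M
  letI : CommGroup M :=
    { (inferInstance : Group M) with
      mul_comm := fun a b => Subtype.ext (Mab a.1 a.2 b.1 b.2) }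
  haveI : Finite (Additive M) := Finite.of_equiv _ Additive.ofMul
  have hVq : ∀ v : Additive M, q • v = 0 := by
    intro v
    have h1 : (Additive.toMul v : M) ^ q = 1 := by
      apply Subtype.ext
      show ((Additive.toMul v : M) ^ q : M).1 = 1
      have h2 : ((Additive.toMul v : M) ^ q : M).1 = ((Additive.toMul v : M) : G) ^ q := rfl
      rw [h2]
      exact hNexp _ (hMeqN ▸ (Additive.toMul v).2)
    calc q • v = q • Additive.ofMul (Additive.toMul v) := rfl
      _ = Additive.ofMul ((Additive.toMul v) ^ q) := (ofMul_pow _ _).symm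
      _ = 0 := by rw [h1]; rfl
  have hcardVtype : Nat.card (Additive M) = q ^ β := by
    rw [Nat.card_congr (Additive.toMul (α := M))]
    exact hMcardβ
  -- conjugation representation of H on M
  let conjM : H → (M →* M) := fun h =>
    { toFun := fun m => ⟨(h : G) * (m : G) * (h : G)⁻¹, hMnormal.conj_mem m.1 m.2 h.1⟩
      map_one' := by
        apply Subtype.ext
        show (h : G) * 1 * (h : G)⁻¹ = 1
        group
      map_mul' := fun m m' => by
        apply Subtype.ext
        show (h : G) * ((m : G) * (m' : G)) * (h : G)⁻¹ =
          ((h : G) * (m : G) * (h : G)⁻¹) * ((h : G) * (m' : G) * (h : G)⁻¹)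
        group }
  let ρ : H →* AddMonoid.End (Additive M) :=
    { toFun := fun h => MonoidHom.toAdditive (conjM h)
      map_one' := by
        apply AddMonoidHom.ext
        intro v
        apply Subtype.ext
        show ((1 : H) : G) * ((Additive.toMul v : M) : G) * (((1 : H) : G))⁻¹ =
          ((Additive.toMul v : M) : G)
        simp only [OneMemClass.coe_one]
        group
      map_mul' := fun h1 h2 => by
        apply AddMonoidHom.ext
        intro v
        apply Subtype.ext
        show ((h1 : G) * (h2 : G)) * ((Additive.toMul v : M) : G) * ((h1 : G) * (h2 : G))⁻¹ =
          (h1 : G) * ((h2 : G) * ((Additive.toMul v : M) : G) * (h2 : G)⁻¹) * (h1 : G)⁻¹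
        group }
  have hinjρ : Function.Injective ρ := by
    rw [injective_iff_map_eq_one]
    intro h hh
    have hcomm : ∀ m ∈ M, (h : G) * m = m * (h : G) := by
      intro m hm
      have h2 : (h : G) * m * (h : G)⁻¹ = m :=
        congrArg (fun f : AddMonoid.End (Additive M) =>
          ((Additive.toMul (f (Additive.ofMul (⟨m, hm⟩ : M))) : M) : G)) hh
      have h2' : ((h : G) * m * (h : G)⁻¹) * (h : G) = m * (h : G) :=
        congrArg (fun z => z * (h : G)) h2
      calc (h : G) * m = ((h : G) * m * (h : G)⁻¹) * (h : G) := by group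
        _ = m * (h : G) := h2'
    have h3 : (h : G) ∈ M := hMcent Mab (h : G) hcomm
    have h4 : (h : G) ∈ M ⊓ H := Subgroup.mem_inf.mpr ⟨h3, h.2⟩
    rw [hMH, Subgroup.mem_bot] at h4
    exact Subtype.ext h4
  have hsimple : ∀ W : AddSubgroup (Additive M),
      (∀ (h : H) (x : Additive M), x ∈ W → ρ h x ∈ W) → W = ⊥ ∨ W = ⊤ := by
    intro W hW
    let W' : Subgroup G :=
      { carrier := {x : G | ∃ hx : x ∈ M, Additive.ofMul (⟨x, hx⟩ : M) ∈ W}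
        one_mem' := ⟨M.one_mem, W.zero_mem⟩
        mul_mem' := by
          rintro x y ⟨hx, hxW⟩ ⟨hy, hyW⟩
          exact ⟨mul_mem hx hy, W.add_mem hxW hyW⟩
        inv_mem' := by
          rintro x ⟨hx, hxW⟩
          exact ⟨inv_mem hx, W.neg_mem hxW⟩ }
    have hW'norm : W'.Normal := by
      constructor
      intro x hx g
      obtain ⟨m, h, hm, hh, rfl⟩ := hfactor g
      obtain ⟨hxM, hxW⟩ := hx
      have h2 := hW ⟨h, hh⟩ _ hxW
      have h1 : (h * x * h⁻¹) ∈ W' := ⟨hMnormal.conj_mem x hxM h, h2⟩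
      obtain ⟨hyM, hyW⟩ := h1
      have h3 : (m * h) * x * (m * h)⁻¹ = m * (h * x * h⁻¹) * m⁻¹ := by group
      have h4 : m * (h * x * h⁻¹) * m⁻¹ = h * x * h⁻¹ := by
        have h5 := Mab m hm _ hyM
        rw [h5]; group
      have h6 : (m * h) * x * (m * h)⁻¹ ∈ W' := by
        rw [h3, h4]
        exact ⟨hyM, hyW⟩
      exact h6
    have hW'M : W' ≤ M := fun x hx => hx.1
    by_cases hbot : W' = ⊥
    · left
      ext v
      simp only [AddSubgroup.mem_bot]
      constructor
      · intro hv
        have h5 : ((Additive.toMul v : M) : G) ∈ W' := ⟨(Additive.toMul v).2, hv⟩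
        rw [hbot, Subgroup.mem_bot] at h5
        have h6 : (Additive.toMul v : M) = 1 := Subtype.ext h5
        exact h6
      · rintro rfl
        exact W.zero_mem
    · right
      have hW'eqM := hMmin W' hW'norm hbot hW'M
      ext v
      simp only [AddSubgroup.mem_top, iff_true]
      have h6 : ((Additive.toMul v : M) : G) ∈ W' := by
        rw [hW'eqM]; exact (Additive.toMul v).2
      obtain ⟨hx, hxW⟩ := h6
      exact hxW
  have hHcommType : ∀ a b : H, a * b = b * a := fun a b =>
    Subtype.ext (hHab a.1 a.2 b.1 b.2)
  have hHexpType : ∀ h : H, h ^ r = 1 := by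
    intro h
    apply Subtype.ext
    show ((h ^ r : H) : G) = 1
    have h2 : ((h ^ r : H) : G) = (h : G) ^ r := rfl
    rw [h2]
    exact hHr h.1 h.2
  obtain ⟨hγ1, hβord, hrlt⟩ :=
    aqar_ring_aux hq hr hqr hβ hγ (Additive M) hVq hcardVtype H hHcommType hHcard hHexpType
      ρ hinjρ hsimple
  -- final assembly
  have hn : q ^ β = n := by rw [← hMcardβ, hMcardn]
  have hn2 : 2 ≤ n := by omega
  refine ⟨hMcardβ, hn, hβord, ⟨H, ?_, hMH, hsup⟩, ?_, ?_⟩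
  · rw [hHcard, hγ1, pow_one]
  · rw [hcard, hγ1, pow_one, hn]
  · have hrn : r < n := by rw [← hn]; exact hrlt
    calc n * r < n * n := mul_lt_mul_of_pos_left hrn (by omega)
      _ = n ^ 2 := (sq n).symm
end

section
/- Let s be a prime power and r a prime with gcd(r,s) = 1. Any two irreducible cyclic subgroups of order r in GL(α, F_s) are conjugate in GL(α, F_s). -/
/-- A subgroup of GL(α, F) is irreducible if the only subspaces of F^α invariant
under all its elements are 0 and the whole space. -/
def IsIrreducibleSubgroup {α : ℕ} {F : Type*} [Field F]
    (G : Subgroup (Matrix.GeneralLinearGroup (Fin α) F)) : Prop :=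
  ∀ W : Submodule F (Fin α → F),
    (∀ g ∈ G, ∀ v ∈ W, (g : Matrix (Fin α) (Fin α) F).mulVec v ∈ W) → W = ⊥ ∨ W = ⊤

open Polynomial Module
set_option synthInstance.maxHeartbeats 1000000
set_option maxHeartbeats 1000000

section aux
variable {α : ℕ} {F : Type*} [Field F]

lemma aux_mem {V' : Type*} [AddCommGroup V'] [Module F V'] (T : Module.End F V') (v : V')
    (p : F[X]) :
    p ∈ LinearMap.ker (LinearMap.toSpanSingleton F[X] (Module.AEval' T)
      (Module.AEval'.of T v)) ↔ (Polynomial.aeval T p) v = 0 := by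
  rw [LinearMap.mem_ker, LinearMap.toSpanSingleton_apply]
  rw [← Module.AEval.of_aeval_smul]
  rw [show (aeval T p • v) = (aeval T p) v from rfl]
  constructor
  · intro h
    exact (Module.AEval'.of T).injective (a₁ := (aeval T p) v) (a₂ := 0) (by simpa using h)
  · intro h; rw [h]; simp

lemma aux_simple (G : Subgroup (Matrix.GeneralLinearGroup (Fin α) F))
    (hGirr : IsIrreducibleSubgroup G)
    (g : Matrix.GeneralLinearGroup (Fin α) F) (hgG : g ∈ G)
    (hgen : ∀ u ∈ G, ∃ n : ℕ, u = g ^ n)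
    (T : Module.End F (Fin α → F))
    (hT : T = Matrix.toLinAlgEquiv' (g : Matrix (Fin α) (Fin α) F))
    (p : Submodule F[X] (Module.AEval' T)) :
    p = ⊥ ∨ p = ⊤ := by
  set W : Submodule F (Fin α → F) :=
    (p.restrictScalars F).comap (Module.AEval'.of T).toLinearMap with hW
  have hmemW : ∀ w, w ∈ W ↔ Module.AEval'.of T w ∈ p := fun w => Iff.rfl
  have hkey : ∀ (n : ℕ) (w : Fin α → F), Module.AEval'.of T ((T ^ n) w)
      = (X : F[X]) ^ n • Module.AEval'.of T w := by
    intro n w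
    have : (T ^ n) w = (aeval T ((X : F[X]) ^ n)) w := by simp
    rw [this, show ((aeval T ((X:F[X])^n)) w) = (aeval T ((X:F[X])^n)) • w from rfl,
      Module.AEval.of_aeval_smul]
  have := hGirr W ?_
  · rcases this with h | h
    · left
      rw [eq_bot_iff]
      intro m hm
      have hmm : (Module.AEval'.of T).symm m ∈ W := by
        rw [hmemW]; simpa using hm
      rw [h] at hmm
      have h0 : (Module.AEval'.of T).symm m = 0 := hmm
      simpa using congrArg (Module.AEval'.of T) h0
    · right
      rw [eq_top_iff]
      intro m _
      have hmm : (Module.AEval'.of T).symm m ∈ W := by rw [h]; trivial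
      rw [hmemW] at hmm
      simpa using hmm
  · intro u hu v hv
    obtain ⟨n, rfl⟩ := hgen u hu
    rw [hmemW] at hv ⊢
    have hcoe : ((g ^ n : Matrix.GeneralLinearGroup (Fin α) F) : Matrix (Fin α) (Fin α) F)
        = ((g : Matrix (Fin α) (Fin α) F)) ^ n := Units.val_pow_eq_pow_val g n
    have hmv : ((g ^ n : Matrix.GeneralLinearGroup (Fin α) F) : Matrix (Fin α) (Fin α) F).mulVec v
        = (T ^ n) v := by
      rw [hcoe, hT, ← map_pow]
      exact (Matrix.toLinAlgEquiv'_apply _ v).symm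
    rw [hmv, hkey]
    exact Submodule.smul_mem _ _ hv

lemma aux_fix (G : Subgroup (Matrix.GeneralLinearGroup (Fin α) F))
    (hGirr : IsIrreducibleSubgroup G)
    (g : Matrix.GeneralLinearGroup (Fin α) F) (hgG : g ∈ G)
    (hgen : ∀ u ∈ G, ∃ n : ℕ, u = g ^ n) (hg1 : g ≠ 1)
    (v : Fin α → F) (hv : (g : Matrix (Fin α) (Fin α) F).mulVec v = v) : v = 0 := by
  set T := Matrix.toLinAlgEquiv' (g : Matrix (Fin α) (Fin α) F) with hT
  set W : Submodule F (Fin α → F) := LinearMap.ker (T - LinearMap.id) with hW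
  have hmemW : ∀ w, w ∈ W ↔ T w = w := by
    intro w
    simp [hW, LinearMap.mem_ker, sub_eq_zero]
  have := hGirr W ?_
  · rcases this with h | h
    · have hvW : v ∈ W := by rw [hmemW, hT, Matrix.toLinAlgEquiv'_apply]; exact hv
      rw [h] at hvW; exact hvW
    · exfalso
      apply hg1
      have hTid : T = LinearMap.id := by
        apply LinearMap.ext
        intro w
        have hwW : w ∈ W := by rw [h]; trivial
        rw [hmemW] at hwW; simpa using hwW
      refine Units.ext ?_
      apply Matrix.toLinAlgEquiv'.injective
      rw [Units.val_one, map_one, ← hT, hTid, Module.End.one_eq_id]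
  · intro u hu w hw
    obtain ⟨n, rfl⟩ := hgen u hu
    rw [hmemW] at hw ⊢
    have hcoe : ((g ^ n : Matrix.GeneralLinearGroup (Fin α) F) : Matrix (Fin α) (Fin α) F).mulVec w
        = (T ^ n) w := by
      rw [Units.val_pow_eq_pow_val, hT, ← map_pow]
      exact (Matrix.toLinAlgEquiv'_apply _ w).symm
    rw [hcoe, ← Module.End.mul_apply, ((Commute.refl T).pow_right n).eq,
      Module.End.mul_apply, hw]

lemma aux_span {R N : Type*} [CommRing R] [AddCommGroup N] [Module R N]
    (hsimp : ∀ p : Submodule R N, p = ⊥ ∨ p = ⊤) (v : N) (hv : v ≠ 0) :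
    Function.Surjective (LinearMap.toSpanSingleton R N v) ∧
      Ideal.IsMaximal (LinearMap.ker (LinearMap.toSpanSingleton R N v)) := by
  set φ := LinearMap.toSpanSingleton R N v with hφ
  have hsurj : Function.Surjective φ := by
    rw [← LinearMap.range_eq_top]
    rcases hsimp (LinearMap.range φ) with h | h
    · exfalso
      apply hv
      have hh : φ 1 ∈ LinearMap.range φ := LinearMap.mem_range_self _ _
      rw [h] at hh
      simpa [hφ] using hh
    · exact h
  refine ⟨hsurj, ⟨⟨?_, ?_⟩⟩⟩
  · intro h
    apply hv
    have hh : (1 : R) ∈ LinearMap.ker φ := by rw [h]; trivial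
    simpa [hφ] using hh
  · intro I hI
    have hmap : Submodule.map φ I = ⊤ := by
      rcases hsimp (Submodule.map φ I) with h | h
      · exfalso
        obtain ⟨a, haI, hak⟩ := SetLike.exists_of_lt hI
        have hh : φ a ∈ Submodule.map φ I := Submodule.mem_map_of_mem haI
        rw [h] at hh
        exact hak (by simpa using hh)
      · exact h
    rw [eq_top_iff]
    intro p _
    have hh : φ p ∈ Submodule.map φ I := by rw [hmap]; trivial
    obtain ⟨i, hiI, hip⟩ := hh
    have hker : p - i ∈ LinearMap.ker φ := by
      rw [LinearMap.mem_ker, map_sub, hip, sub_self]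
    have hki : p - i ∈ I := le_of_lt hI hker
    simpa using I.add_mem hki hiI

lemma aux_gen {Γ : Type*} [Group Γ] (G : Subgroup Γ) (r : ℕ) (hr : r.Prime)
    (hG : Nat.card G = r) (g : Γ) (hgG : g ∈ G) (hg : orderOf g = r) :
    (∀ u ∈ G, ∃ n : ℕ, u = g ^ n) ∧ G = Subgroup.zpowers g := by
  haveI : Finite ↥G := Nat.finite_of_card_ne_zero (by rw [hG]; exact hr.pos.ne')
  set gg : ↥G := ⟨g, hgG⟩ with hgg
  have hog : orderOf gg = r := by
    rw [← hg]
    exact (orderOf_injective G.subtype Subtype.coe_injective gg).symm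
  have htop : Subgroup.zpowers gg = ⊤ := by
    apply Subgroup.eq_top_of_card_eq
    rw [Nat.card_zpowers, hog, hG]
  have hgen : ∀ u ∈ G, ∃ n : ℕ, u = g ^ n := by
    intro u hu
    have hmem : (⟨u, hu⟩ : ↥G) ∈ Subgroup.zpowers gg := by rw [htop]; trivial
    rw [← mem_powers_iff_mem_zpowers] at hmem
    obtain ⟨n, hn⟩ := hmem
    refine ⟨n, ?_⟩
    have := congrArg (Subtype.val) hn
    simpa using this.symm
  refine ⟨hgen, le_antisymm ?_ ?_⟩
  · intro u hu
    obtain ⟨n, rfl⟩ := hgen u hu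
    exact Subgroup.pow_mem _ (Subgroup.mem_zpowers g) n
  · rw [Subgroup.zpowers_le]
    exact hgG

end aux

lemma aux_root {Fq : Type*} [Field Fq] (r : ℕ) (hr : r.Prime)
    (Ig Ih : Ideal (Polynomial Fq)) [hIgm : Ig.IsMaximal] [hIhm : Ih.IsMaximal]
    (hfin : Finite (Fq[X] ⧸ Ig))
    (hXg : ((X : Fq[X]) ^ r - 1) ∈ Ig) (hXh : ((X : Fq[X]) ^ r - 1) ∈ Ih)
    (hg1 : ((X : Fq[X]) - 1) ∉ Ig) (hh1 : ((X : Fq[X]) - 1) ∉ Ih) :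
    ∃ k, k ≠ 0 ∧ k < r ∧ Nat.Coprime r k ∧
      ∀ p ∈ Ih, aeval ((X : Fq[X]) ^ k) p ∈ Ig := by
  haveI : Fact r.Prime := ⟨hr⟩
  letI : Field (Fq[X] ⧸ Ig) := Ideal.Quotient.field Ig
  haveI : Fintype (Fq[X] ⧸ Ig) := Fintype.ofFinite _
  classical
  have hXrne : ((X : Fq[X]) ^ r - 1) ≠ 0 := by
    simpa using Polynomial.X_pow_sub_C_ne_zero hr.pos (1 : Fq)
  set π := Ideal.Quotient.mk Ig with hπ
  set x : Fq[X] ⧸ Ig := π X with hx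
  have hxr : x ^ r = 1 := by
    have h0 : π ((X : Fq[X]) ^ r - 1) = 0 := Ideal.Quotient.eq_zero_iff_mem.mpr hXg
    rw [map_sub, map_pow, map_one, sub_eq_zero] at h0
    exact h0
  have hx1 : x ≠ 1 := by
    intro e
    apply hg1
    apply Ideal.Quotient.eq_zero_iff_mem.mp
    rw [map_sub, map_one, ← hπ, ← hx, e, sub_self]
  have horderx : orderOf x = r := orderOf_eq_prime hxr hx1
  have hrsucc : r - 1 + 1 = r := Nat.succ_pred_eq_of_pos hr.pos
  set u : (Fq[X] ⧸ Ig)ˣ := ⟨x, x ^ (r - 1), by rw [← pow_succ', hrsucc, hxr], by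
    rw [← pow_succ, hrsucc, hxr]⟩ with hu
  have horderu : orderOf u = r := by
    rw [← horderx]; exact (orderOf_units (y := u)).symm
  have hq2 : 1 < Fintype.card (Fq[X] ⧸ Ig) := Fintype.one_lt_card
  have hq0 : 0 < Fintype.card (Fq[X] ⧸ Ig) := lt_trans one_pos hq2
  have hx0 : x ≠ 0 := by
    intro e
    rw [e, zero_pow hr.pos.ne'] at hxr
    exact one_ne_zero hxr.symm
  have hdvd_card : r ∣ Fintype.card (Fq[X] ⧸ Ig) - 1 := by
    rw [← horderx]
    exact orderOf_dvd_of_pow_eq_one (FiniteField.pow_card_sub_one_eq_one x hx0)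
  -- the generator f' of Ih
  haveI : Ih.IsPrincipal := inferInstance
  set f' : Fq[X] := Submodule.IsPrincipal.generator (Ih : Submodule Fq[X] Fq[X]) with hf'
  have hspan : Ideal.span {f'} = Ih := Ideal.span_singleton_generator Ih
  have hdvd1 : f' ∣ (X : Fq[X]) ^ r - 1 := by
    rw [← Ideal.mem_span_singleton, hspan]; exact hXh
  have hf'0 : f' ≠ 0 := by
    intro e
    rw [e] at hspan
    rw [Ideal.span_singleton_eq_bot.mpr rfl] at hspan
    rw [← hspan] at hXh
    exact hXrne hXh
  have hf'nu : ¬IsUnit f' := by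
    intro hu'
    exact hIhm.ne_top (by rw [← hspan, Ideal.span_singleton_eq_top]; exact hu')
  have hdegf' : f'.degree ≠ 0 := fun e => hf'nu (Polynomial.isUnit_iff_degree_eq_zero.mpr e)
  -- f' has a root y in the quotient field
  obtain ⟨m, hm⟩ := hdvd_card
  have hd1 : ((X : Fq[X]) ^ r - 1) ∣ (X : Fq[X]) ^ (Fintype.card (Fq[X] ⧸ Ig) - 1) - 1 := by
    rw [hm, pow_mul]
    simpa using sub_dvd_pow_sub_pow ((X : Fq[X]) ^ r) 1 m
  have hd2 : ((X : Fq[X]) ^ (Fintype.card (Fq[X] ⧸ Ig) - 1) - 1) ∣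
      (X : Fq[X]) ^ (Fintype.card (Fq[X] ⧸ Ig)) - X := by
    refine ⟨X, ?_⟩
    rw [sub_mul, one_mul, ← pow_succ, Nat.sub_add_cancel hq0]
  have hdq : f' ∣ (X : Fq[X]) ^ (Fintype.card (Fq[X] ⧸ Ig)) - X := hdvd1.trans (hd1.trans hd2)
  have hdqK : (f'.map (algebraMap Fq (Fq[X] ⧸ Ig))) ∣
      ((X : (Fq[X] ⧸ Ig)[X]) ^ (Fintype.card (Fq[X] ⧸ Ig)) - X) := by
    have := Polynomial.map_dvd (algebraMap Fq (Fq[X] ⧸ Ig)) hdq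
    simpa using this
  have hne0 : ((X : (Fq[X] ⧸ Ig)[X]) ^ (Fintype.card (Fq[X] ⧸ Ig)) - X) ≠ 0 :=
    FiniteField.X_pow_card_sub_X_ne_zero _ hq2
  have hntd : ((X : (Fq[X] ⧸ Ig)[X]) ^ (Fintype.card (Fq[X] ⧸ Ig)) - X).natDegree
      = Fintype.card (Fq[X] ⧸ Ig) :=
    FiniteField.X_pow_card_sub_X_natDegree_eq _ hq2
  have hsp : Polynomial.Splits
      ((X : (Fq[X] ⧸ Ig)[X]) ^ (Fintype.card (Fq[X] ⧸ Ig)) - X) := by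
    rw [Polynomial.splits_iff_card_roots, FiniteField.roots_X_pow_card_sub_X, hntd]
    simp
  have hspf : Polynomial.Splits (f'.map (algebraMap Fq (Fq[X] ⧸ Ig))) :=
    Polynomial.Splits.of_dvd hsp hne0 hdqK
  have hdegmap : (f'.map (algebraMap Fq (Fq[X] ⧸ Ig))).degree ≠ 0 := by
    rwa [Polynomial.degree_map_eq_of_injective (algebraMap Fq (Fq[X] ⧸ Ig)).injective]
  obtain ⟨y, hy⟩ := Polynomial.Splits.exists_eval_eq_zero hspf hdegmap
  have hyf : aeval y f' = 0 := by
    rw [aeval_def, ← Polynomial.eval_map]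
    exact hy
  have hyr : y ^ r = 1 := by
    obtain ⟨c, hc⟩ := hdvd1
    have h0 : aeval y ((X : Fq[X]) ^ r - 1) = 0 := by rw [hc, map_mul, hyf, zero_mul]
    rw [map_sub, map_one, map_pow, aeval_X, sub_eq_zero] at h0
    exact h0
  have hy1 : y ≠ 1 := by
    intro e
    have h1root : Polynomial.eval (1 : Fq) f' = 0 := by
      have h0 : aeval ((algebraMap Fq (Fq[X] ⧸ Ig)) 1) f' = 0 := by rwa [map_one, ← e]
      rw [Polynomial.aeval_algebraMap_apply_eq_algebraMap_eval] at h0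
      exact (map_eq_zero_iff _ (algebraMap Fq (Fq[X] ⧸ Ig)).injective).mp h0
    have hdvdX1 : ((X : Fq[X]) - C 1) ∣ f' := Polynomial.dvd_iff_isRoot.mpr h1root
    have hle : Ideal.span {f'} ≤ Ideal.span {(X : Fq[X]) - C 1} :=
      Ideal.span_singleton_le_span_singleton.mpr hdvdX1
    have hneT : Ideal.span {(X : Fq[X]) - C 1} ≠ ⊤ := by
      rw [Ne, Ideal.span_singleton_eq_top, Polynomial.isUnit_iff_degree_eq_zero,
        Polynomial.degree_X_sub_C]
      simp
    have heq : Ih = Ideal.span {(X : Fq[X]) - C 1} := hIhm.eq_of_le hneT (hspan ▸ hle)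
    apply hh1
    have : ((X : Fq[X]) - C 1) ∈ Ih := heq ▸ Ideal.mem_span_singleton_self _
    simpa using this
  -- y = x ^ k for some k coprime to r
  set P : (Fq[X] ⧸ Ig)[X] := (X : (Fq[X] ⧸ Ig)[X]) ^ r - C 1 with hP
  have hPne : P ≠ 0 := Polynomial.X_pow_sub_C_ne_zero hr.pos 1
  have hyP : y ∈ P.roots.toFinset := by
    rw [Multiset.mem_toFinset, Polynomial.mem_roots hPne]
    simp [hP, Polynomial.IsRoot.def, hyr]
  set S : Finset (Fq[X] ⧸ Ig) := Finset.image (fun j => ((u ^ j : (Fq[X] ⧸ Ig)ˣ) :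
    Fq[X] ⧸ Ig)) (Finset.range r) with hS
  have hSsub : S ⊆ P.roots.toFinset := by
    intro z hz
    obtain ⟨j, _, rfl⟩ := Finset.mem_image.mp hz
    rw [Multiset.mem_toFinset, Polynomial.mem_roots hPne]
    have hjr : ((x : Fq[X] ⧸ Ig) ^ j) ^ r = 1 := by
      rw [← pow_mul, mul_comm, pow_mul, hxr, one_pow]
    simp [hP, Polynomial.IsRoot.def, Units.val_pow_eq_pow_val, hjr]
    exact sub_eq_zero.mpr hjr
  have hScard : S.card = r := by
    rw [hS, Finset.card_image_of_injOn, Finset.card_range]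
    intro i hi j hj e
    have : u ^ i = u ^ j := Units.ext e
    exact pow_injOn_Iio_orderOf (by rw [horderu]; exact Finset.mem_range.mp hi)
      (by rw [horderu]; exact Finset.mem_range.mp hj) this
  have hcard_le : P.roots.toFinset.card ≤ r :=
    le_trans (Multiset.toFinset_card_le _)
      (le_trans (Polynomial.card_roots' P) (by rw [hP, Polynomial.natDegree_X_pow_sub_C]))
  have hyS : y ∈ S := by
    by_contra hyS
    have hins : insert y S ⊆ P.roots.toFinset := by
      intro z hz
      rcases Finset.mem_insert.mp hz with rfl | hz'
      · exact hyP
      · exact hSsub hz'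
    have hgt : r + 1 ≤ P.roots.toFinset.card := by
      rw [← hScard, ← Finset.card_insert_of_notMem hyS]
      exact Finset.card_le_card hins
    omega
  obtain ⟨k, hk_mem, hk⟩ := Finset.mem_image.mp hyS
  have hkx : y = x ^ k := by
    rw [← hk, Units.val_pow_eq_pow_val]
  have hk0 : k ≠ 0 := by
    intro e; apply hy1; rw [hkx, e, pow_zero]
  have hkr : k < r := Finset.mem_range.mp hk_mem
  have hcop : Nat.Coprime r k :=
    (hr.coprime_iff_not_dvd).mpr (fun hd => by
      have := Nat.le_of_dvd (Nat.pos_of_ne_zero hk0) hd; omega)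
  refine ⟨k, hk0, hkr, hcop, ?_⟩
  intro p hp
  rw [← hspan, Ideal.mem_span_singleton] at hp
  obtain ⟨c, rfl⟩ := hp
  rw [map_mul]
  apply Ideal.mul_mem_right
  apply Ideal.Quotient.eq_zero_iff_mem.mp
  have hπa : Ideal.Quotient.mk Ig (aeval ((X : Fq[X]) ^ k) f')
      = aeval ((Ideal.Quotient.mkₐ Fq Ig) ((X : Fq[X]) ^ k)) f' := by
    rw [← Ideal.Quotient.mkₐ_eq_mk Fq Ig]
    exact (Polynomial.aeval_algHom_apply (Ideal.Quotient.mkₐ Fq Ig) ((X : Fq[X]) ^ k) f').symm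
  rw [← hπ, hπa, map_pow, Ideal.Quotient.mkₐ_eq_mk Fq Ig, ← hπ, ← hx, ← hkx, hyf]


lemma aux_conj {α : ℕ} {F : Type*} [Field F] (A B : Matrix (Fin α) (Fin α) F)
    (e : Module.AEval' (Matrix.toLinAlgEquiv' A) ≃ₗ[F[X]]
      Module.AEval' (Matrix.toLinAlgEquiv' B)) :
    ∃ P Q : Matrix (Fin α) (Fin α) F, P * Q = 1 ∧ Q * P = 1 ∧ P * A = B * P := by
  set T1 := Matrix.toLinAlgEquiv' A with hT1
  set T2 := Matrix.toLinAlgEquiv' B with hT2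
  set eV : (Fin α → F) ≃ₗ[F] (Fin α → F) :=
    (Module.AEval'.of T1).trans ((e.restrictScalars F).trans (Module.AEval'.of T2).symm)
    with heV
  have hmul1 : eV.toLinearMap * eV.symm.toLinearMap = 1 := by
    apply LinearMap.ext
    intro w
    rw [Module.End.mul_apply, Module.End.one_apply]
    show eV (eV.symm w) = w
    exact eV.apply_symm_apply w
  have hmul2 : eV.symm.toLinearMap * eV.toLinearMap = 1 := by
    apply LinearMap.ext
    intro w
    rw [Module.End.mul_apply, Module.End.one_apply]
    show eV.symm (eV w) = w
    exact eV.symm_apply_apply w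
  have hintertwine : eV.toLinearMap * T1 = T2 * eV.toLinearMap := by
    apply LinearMap.ext
    intro w
    rw [Module.End.mul_apply, Module.End.mul_apply]
    show (Module.AEval'.of T2).symm (e (Module.AEval'.of T1 (T1 w)))
      = T2 ((Module.AEval'.of T2).symm (e (Module.AEval'.of T1 w)))
    rw [← Module.AEval'.X_smul_of, map_smul, Module.AEval'.of_symm_X_smul]
  refine ⟨LinearMap.toMatrixAlgEquiv' eV.toLinearMap,
    LinearMap.toMatrixAlgEquiv' eV.symm.toLinearMap, ?_, ?_, ?_⟩
  · rw [← map_mul, hmul1, map_one]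
  · rw [← map_mul, hmul2, map_one]
  · have h1 := congrArg LinearMap.toMatrixAlgEquiv' hintertwine
    rw [map_mul, map_mul, hT1, hT2, LinearMap.toMatrixAlgEquiv'_toLinAlgEquiv',
      LinearMap.toMatrixAlgEquiv'_toLinAlgEquiv'] at h1
    exact h1


/-- Any two irreducible cyclic subgroups of order r in GL(α, F_s), with r prime
coprime to s, are conjugate in GL(α, F_s). -/
theorem irreducible_cyclic_subgroups_conjugate (s r α : ℕ) (F : Type*) [Field F]
    [Fintype F] (hs : Fintype.card F = s) (hr : r.Prime) (hrs : Nat.Coprime r s)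
    (G H : Subgroup (Matrix.GeneralLinearGroup (Fin α) F))
    (hGirr : IsIrreducibleSubgroup G) (hGcyc : IsCyclic G) (hGcard : Nat.card G = r)
    (hHirr : IsIrreducibleSubgroup H) (hHcyc : IsCyclic H) (hHcard : Nat.card H = r) :
    ∃ x : Matrix.GeneralLinearGroup (Fin α) F,
      Subgroup.map (MulAut.conj x).toMonoidHom G = H := by
  classical
  haveI : Fact r.Prime := ⟨hr⟩
  -- α is positive
  rcases Nat.eq_zero_or_pos α with hα0 | hα
  · exfalso
    subst hα0
    haveI : Subsingleton (Matrix (Fin 0) (Fin 0) F) := by infer_instance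
    haveI : Subsingleton (Matrix.GeneralLinearGroup (Fin 0) F) :=
      ⟨fun a b => Units.ext (Subsingleton.elim _ _)⟩
    haveI : Unique ↥G := @Unique.mk' _ ⟨(1 : ↥G)⟩ _
    have : Nat.card ↥G = 1 := Nat.card_unique
    rw [hGcard] at this
    exact hr.ne_one this
  -- generators
  obtain ⟨ζ, hζ⟩ := hGcyc.exists_generator
  obtain ⟨η, hη⟩ := hHcyc.exists_generator
  set g : Matrix.GeneralLinearGroup (Fin α) F := (ζ : Matrix.GeneralLinearGroup (Fin α) F)
    with hgdef
  set h : Matrix.GeneralLinearGroup (Fin α) F := (η : Matrix.GeneralLinearGroup (Fin α) F)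
    with hhdef
  have hgG : g ∈ G := ζ.2
  have hhH : h ∈ H := η.2
  haveI : Finite ↥G := Nat.finite_of_card_ne_zero (by rw [hGcard]; exact hr.pos.ne')
  haveI : Finite ↥H := Nat.finite_of_card_ne_zero (by rw [hHcard]; exact hr.pos.ne')
  have horderζ : orderOf ζ = r := by
    have htop : Subgroup.zpowers ζ = ⊤ := by
      rw [eq_top_iff]; intro z _; exact hζ z
    have := Nat.card_zpowers ζ
    rw [htop] at this
    rw [← this, Subgroup.card_top, hGcard]
  have horderη : orderOf η = r := by
    have htop : Subgroup.zpowers η = ⊤ := by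
      rw [eq_top_iff]; intro z _; exact hη z
    have := Nat.card_zpowers η
    rw [htop] at this
    rw [← this, Subgroup.card_top, hHcard]
  have horderg : orderOf g = r := by
    rw [← horderζ]; exact orderOf_injective G.subtype Subtype.coe_injective ζ
  have horderh : orderOf h = r := by
    rw [← horderη]; exact orderOf_injective H.subtype Subtype.coe_injective η
  obtain ⟨hgenG, hGz⟩ := aux_gen G r hr hGcard g hgG horderg
  obtain ⟨hgenH, hHz⟩ := aux_gen H r hr hHcard h hhH horderh
  have hg1 : g ≠ 1 := by
    intro e; exact hr.ne_one (by rw [← horderg, e, orderOf_one])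
  have hh1 : h ≠ 1 := by
    intro e; exact hr.ne_one (by rw [← horderh, e, orderOf_one])
  -- matrices
  set gM : Matrix (Fin α) (Fin α) F := (g : Matrix (Fin α) (Fin α) F) with hgM
  set hM : Matrix (Fin α) (Fin α) F := (h : Matrix (Fin α) (Fin α) F) with hhM
  have hgMr : gM ^ r = 1 := by
    rw [hgM, ← Units.val_pow_eq_pow_val, ← horderg, pow_orderOf_eq_one, Units.val_one]
  have hhMr : hM ^ r = 1 := by
    rw [hhM, ← Units.val_pow_eq_pow_val, ← horderh, pow_orderOf_eq_one, Units.val_one]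
  -- the vector
  set v : Fin α → F := Pi.single (⟨0, hα⟩ : Fin α) (1 : F) with hvdef
  have hv : v ≠ 0 := by
    intro e
    have := congrFun e (⟨0, hα⟩ : Fin α)
    rw [hvdef] at this
    simp at this
  -- endomorphisms
  set Tg : Module.End F (Fin α → F) := Matrix.toLinAlgEquiv' gM with hTg
  set Th : Module.End F (Fin α → F) := Matrix.toLinAlgEquiv' hM with hTh
  have simple_g := aux_simple G hGirr g hgG hgenG Tg hTg
  have simple_h := aux_simple H hHirr h hhH hgenH Th hTh
  have hvg : Module.AEval'.of Tg v ≠ 0 := by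
    intro e
    exact hv (by simpa using congrArg (Module.AEval'.of Tg).symm e)
  have hvh : Module.AEval'.of Th v ≠ 0 := by
    intro e
    exact hv (by simpa using congrArg (Module.AEval'.of Th).symm e)
  obtain ⟨surjg, maxg⟩ := aux_span simple_g (Module.AEval'.of Tg v) hvg
  obtain ⟨surjh, maxh⟩ := aux_span simple_h (Module.AEval'.of Th v) hvh
  set φg := LinearMap.toSpanSingleton F[X] (Module.AEval' Tg) (Module.AEval'.of Tg v) with hφg
  set φh := LinearMap.toSpanSingleton F[X] (Module.AEval' Th) (Module.AEval'.of Th v) with hφh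
  set Ig : Ideal F[X] := LinearMap.ker φg with hIg
  set Ih : Ideal F[X] := LinearMap.ker φh with hIh
  haveI hIgmax : Ig.IsMaximal := maxg
  haveI hIhmax : Ih.IsMaximal := maxh
  -- X^r - 1 lies in both kernels
  have hXrg : ((X : F[X]) ^ r - 1) ∈ Ig := by
    rw [hIg, hφg, aux_mem]
    have : aeval Tg ((X : F[X]) ^ r - 1) = 0 := by
      rw [map_sub, map_one, map_pow, aeval_X, hTg, ← map_pow, hgMr, map_one, sub_self]
    rw [this]; rfl
  have hXrh : ((X : F[X]) ^ r - 1) ∈ Ih := by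
    rw [hIh, hφh, aux_mem]
    have : aeval Th ((X : F[X]) ^ r - 1) = 0 := by
      rw [map_sub, map_one, map_pow, aeval_X, hTh, ← map_pow, hhMr, map_one, sub_self]
    rw [this]; rfl
  have hXrne : ((X : F[X]) ^ r - 1) ≠ 0 := by
    simpa using Polynomial.X_pow_sub_C_ne_zero hr.pos (1 : F)
  have hX1g : ((X : F[X]) - 1) ∉ Ig := by
    intro hX1
    rw [hIg, hφg, aux_mem] at hX1
    rw [map_sub, map_one, aeval_X] at hX1
    have hfix : Tg v = v := by
      rw [LinearMap.sub_apply, Module.End.one_apply, sub_eq_zero] at hX1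
      exact hX1
    have hmv : gM.mulVec v = v := by rw [← Matrix.toLinAlgEquiv'_apply, ← hTg]; exact hfix
    exact hv (aux_fix G hGirr g hgG hgenG hg1 v hmv)
  have hX1h : ((X : F[X]) - 1) ∉ Ih := by
    intro hX1
    rw [hIh, hφh, aux_mem] at hX1
    rw [map_sub, map_one, aeval_X] at hX1
    have hfix : Th v = v := by
      rw [LinearMap.sub_apply, Module.End.one_apply, sub_eq_zero] at hX1
      exact hX1
    have hmv : hM.mulVec v = v := by rw [← Matrix.toLinAlgEquiv'_apply, ← hTh]; exact hfix
    exact hv (aux_fix H hHirr h hhH hgenH hh1 v hmv)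
  haveI : Finite (Module.AEval' Tg) :=
    Finite.of_equiv (Fin α → F) (Module.AEval'.of Tg).toEquiv
  haveI : Finite (F[X] ⧸ Ig) :=
    Finite.of_equiv (Module.AEval' Tg) (φg.quotKerEquivOfSurjective surjg).toEquiv.symm
  obtain ⟨k, hk0, hkr, hcop, hcomp⟩ := aux_root r hr Ig Ih this hXrg hXrh hX1g hX1h
  -- conjugating element setup
  have horder_gk : orderOf (g ^ k) = r := by
    rw [Nat.Coprime.orderOf_pow (by rw [horderg]; exact hcop), horderg]
  have hgkG : g ^ k ∈ G := G.pow_mem hgG k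
  obtain ⟨hgenGk, hGzk⟩ := aux_gen G r hr hGcard (g ^ k) hgkG horder_gk
  set T1 : Module.End F (Fin α → F) :=
    Matrix.toLinAlgEquiv' ((g ^ k : Matrix.GeneralLinearGroup (Fin α) F) :
      Matrix (Fin α) (Fin α) F) with hT1
  have simple_gk := aux_simple G hGirr (g ^ k) hgkG hgenGk T1 hT1
  have hv1 : Module.AEval'.of T1 v ≠ 0 := by
    intro e
    exact hv (by simpa using congrArg (Module.AEval'.of T1).symm e)
  obtain ⟨surj1, max1⟩ := aux_span simple_gk (Module.AEval'.of T1 v) hv1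
  set φ1 := LinearMap.toSpanSingleton F[X] (Module.AEval' T1) (Module.AEval'.of T1 v) with hφ1
  have hT1g : T1 = Tg ^ k := by
    rw [hT1, Units.val_pow_eq_pow_val, map_pow, hTg, hgM]
  -- the conjugating element
  have horder_gk : orderOf (g ^ k) = r := by
    rw [Nat.Coprime.orderOf_pow (by rw [horderg]; exact hcop), horderg]
  have hgkG : g ^ k ∈ G := G.pow_mem hgG k
  obtain ⟨hgenGk, hGzk⟩ := aux_gen G r hr hGcard (g ^ k) hgkG horder_gk
  set T1 : Module.End F (Fin α → F) :=
    Matrix.toLinAlgEquiv' ((g ^ k : Matrix.GeneralLinearGroup (Fin α) F) :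
      Matrix (Fin α) (Fin α) F) with hT1
  have simple_gk := aux_simple G hGirr (g ^ k) hgkG hgenGk T1 hT1
  have hv1 : Module.AEval'.of T1 v ≠ 0 := by
    intro e
    exact hv (by simpa using congrArg (Module.AEval'.of T1).symm e)
  obtain ⟨surj1, max1⟩ := aux_span simple_gk (Module.AEval'.of T1 v) hv1
  set φ1 := LinearMap.toSpanSingleton F[X] (Module.AEval' T1) (Module.AEval'.of T1 v) with hφ1
  have hT1g : T1 = Tg ^ k := by
    rw [hT1, Units.val_pow_eq_pow_val, map_pow, hTg, hgM]
  -- Ih is contained in the kernel of φ1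
  have hIh_le : Ih ≤ LinearMap.ker φ1 := by
    intro p hp
    have hpin : aeval ((X : F[X]) ^ k) p ∈ Ig := hcomp p hp
    rw [hφ1, aux_mem]
    have haev : aeval T1 p = aeval Tg (aeval ((X : F[X]) ^ k) p) := by
      rw [hT1g]
      have h1 : (Tg : Module.End F (Fin α → F)) ^ k = (aeval Tg) ((X : F[X]) ^ k) := by
        rw [map_pow, aeval_X]
      rw [h1]
      exact Polynomial.aeval_algHom_apply (Polynomial.aeval Tg) ((X : F[X]) ^ k) p
    rw [haev]
    rw [hIg, hφg, aux_mem] at hpin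
    exact hpin
  have hkereq : LinearMap.ker φ1 = LinearMap.ker φh := by
    have := hIhmax.eq_of_le max1.ne_top hIh_le
    rw [hIh] at this
    exact this.symm
  -- build the intertwining linear equivalence and the conjugating matrix
  have e : Module.AEval' T1 ≃ₗ[F[X]] Module.AEval' Th :=
    ((φ1.quotKerEquivOfSurjective surj1).symm.trans
      (Submodule.quotEquivOfEq _ _ hkereq)).trans
      (φh.quotKerEquivOfSurjective surjh)
  obtain ⟨Pm, Qm, hPQ, hQP, hPg⟩ := aux_conj ((g ^ k : Matrix.GeneralLinearGroup (Fin α) F) :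
    Matrix (Fin α) (Fin α) F) hM e
  set xx : Matrix.GeneralLinearGroup (Fin α) F := ⟨Pm, Qm, hPQ, hQP⟩ with hxx
  have hconj : xx * g ^ k * xx⁻¹ = h := by
    apply Units.ext
    have hxinv : ((xx⁻¹ : Matrix.GeneralLinearGroup (Fin α) F) :
        Matrix (Fin α) (Fin α) F) = Qm := rfl
    rw [Units.val_mul, Units.val_mul, hxinv]
    rw [show ((xx : Matrix.GeneralLinearGroup (Fin α) F) :
      Matrix (Fin α) (Fin α) F) = Pm from rfl]
    rw [hPg, mul_assoc, hPQ, mul_one]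
  refine ⟨xx, ?_⟩
  rw [hGzk, hHz, MonoidHom.map_zpowers,
    show (MulAut.conj xx).toMonoidHom (g ^ k) = xx * g ^ k * xx⁻¹ from rfl, hconj]
end

section
/- Let G be a finite group in the variety 𝔄_p𝔄_q𝔄_r for distinct primes p, q, r, and set G₁ = G/O_{p'}(G), G₂ = G/O_{q'}(G), G₃ = G/O_{r'}(G). Then the natural map G → G₁ × G₂ × G₃ is injective, i.e., O_{p'}(G) ∩ O_{q'}(G) ∩ O_{r'}(G) = 1. -/
/-- A group lies in the variety 𝔄_p𝔄_q𝔄_r: it has a normal series 1 ≤ N ≤ M ≤ G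
with N abelian of exponent dividing p, M/N abelian of exponent dividing q, and
G/M abelian of exponent dividing r. -/
def InS (p q r : ℕ) (G : Type*) [Group G] : Prop :=
  ∃ N M : Subgroup G, N.Normal ∧ M.Normal ∧ N ≤ M ∧
    (∀ a ∈ N, ∀ b ∈ N, a * b = b * a) ∧ (∀ a ∈ N, a ^ p = 1) ∧
    (∀ a ∈ M, ∀ b ∈ M, a * b * a⁻¹ * b⁻¹ ∈ N) ∧ (∀ a ∈ M, a ^ q ∈ N) ∧
    (∀ a b : G, a * b * a⁻¹ * b⁻¹ ∈ M) ∧ (∀ a : G, a ^ r ∈ M)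

/-- O_{u'}(G): the largest normal subgroup of G of order coprime to u, realised
as the join of all normal subgroups of order coprime to u. -/
def Ocoprime (u : ℕ) (G : Type*) [Group G] : Subgroup G :=
  sSup {N : Subgroup G | N.Normal ∧ (Nat.card N).Coprime u}

/-- The order of the join `H ⊔ N` with `N` normal divides `|H| * |N|`. -/
lemma card_sup_dvd {G : Type*} [Group G] [Finite G] (H N : Subgroup G) [N.Normal] :
    Nat.card (H ⊔ N : Subgroup G) ∣ Nat.card H * Nat.card N := by
  have h1 := Subgroup.card_eq_card_quotient_mul_card_subgroup (N.subgroupOf (H ⊔ N))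
  have e1 : Nat.card (N.subgroupOf (H ⊔ N)) = Nat.card N :=
    Nat.card_congr (Subgroup.subgroupOfEquivOfLe le_sup_right).toEquiv
  have e2 : Nat.card ((H ⊔ N : Subgroup G) ⧸ N.subgroupOf (H ⊔ N)) =
      Nat.card (H ⧸ N.subgroupOf H) :=
    (Nat.card_congr (QuotientGroup.quotientInfEquivProdNormalQuotient H N).toEquiv).symm
  have h2 : Nat.card (H ⧸ N.subgroupOf H) ∣ Nat.card H :=
    ⟨Nat.card (N.subgroupOf H), Subgroup.card_eq_card_quotient_mul_card_subgroup _⟩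
  rw [h1, e1, e2]
  exact Nat.mul_dvd_mul h2 dvd_rfl

/-- The order of `O_{u'}(G)` is coprime to `u`. -/
lemma Ocoprime_coprime (u : ℕ) (G : Type*) [Group G] [Finite G] :
    (Nat.card (Ocoprime u G)).Coprime u := by
  set S := {N : Subgroup G | N.Normal ∧ (Nat.card N).Coprime u} with hS
  have hbot : (⊥ : Subgroup G) ∈ S := ⟨inferInstance, by simp⟩
  obtain ⟨K, hK, hmax⟩ : ∃ K ∈ S, ∀ A ∈ S, id K ≤ id A → id K = id A := by
    obtain ⟨K, hK⟩ := (Set.toFinite S).exists_maximal ⟨⊥, hbot⟩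
    exact ⟨K, hK.1, fun A hA h => le_antisymm h (hK.2 hA h)⟩
  have hle : ∀ A ∈ S, A ≤ K := by
    intro A hA
    haveI := hA.1; haveI := hK.1
    have hmem : A ⊔ K ∈ S :=
      ⟨inferInstance,
        Nat.Coprime.coprime_dvd_left (card_sup_dvd A K) (hA.2.mul hK.2)⟩
    have : K = A ⊔ K := hmax _ hmem le_sup_right
    exact le_sup_left.trans this.ge
  have : Ocoprime u G = K := le_antisymm (sSup_le hle) (le_sSup hK)
  rw [this]; exact hK.2

/-- For a finite group G in 𝔄_p𝔄_q𝔄_r, the intersection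
O_{p'}(G) ∩ O_{q'}(G) ∩ O_{r'}(G) is trivial, i.e. the natural map
G → G/O_{p'}(G) × G/O_{q'}(G) × G/O_{r'}(G) is injective. -/
theorem Ocoprime_inter_eq_bot (p q r : ℕ) (hp : p.Prime) (hq : q.Prime)
    (hr : r.Prime) (hpq : p ≠ q) (hpr : p ≠ r) (hqr : q ≠ r)
    (G : Type*) [Group G] [Finite G] (hG : InS p q r G) :
    Ocoprime p G ⊓ Ocoprime q G ⊓ Ocoprime r G = ⊥ := by
  have hexp : ∀ g : G, g ^ (p * q * r) = 1 := by
    obtain ⟨N, M, _, _, hNM, _, hNp, _, hMq, _, hGr⟩ := hG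
    intro g
    have h2 : (g ^ r) ^ q ∈ N := hMq _ (hGr g)
    have h3 := hNp _ h2
    rw [← pow_mul, ← pow_mul] at h3
    rw [show p * q * r = r * (q * p) by ring]
    exact h3
  set H := Ocoprime p G ⊓ Ocoprime q G ⊓ Ocoprime r G with hH
  rw [← Subgroup.card_eq_one]
  by_contra hne
  set s := (Nat.card H).minFac with hs
  have hsp : s.Prime := Nat.minFac_prime hne
  obtain ⟨x, hx⟩ :=
    haveI : Fact s.Prime := ⟨hsp⟩
    exists_prime_orderOf_dvd_card' (G := H) s (Nat.minFac_dvd _)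
  have hx1 : (x : G) ^ (p * q * r) = 1 := hexp _
  have hxH : x ^ (p * q * r) = 1 := by
    ext
    push_cast
    exact hx1
  have hdvd : s ∣ p * q * r := hx ▸ orderOf_dvd_of_pow_eq_one hxH
  have hcop : (Nat.card H).Coprime (p * q * r) := by
    have c1 : (Nat.card H).Coprime p :=
      (Ocoprime_coprime p G).coprime_dvd_left
        (Subgroup.card_dvd_of_le (inf_le_left.trans inf_le_left))
    have c2 : (Nat.card H).Coprime q :=
      (Ocoprime_coprime q G).coprime_dvd_left
        (Subgroup.card_dvd_of_le (inf_le_left.trans inf_le_right))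
    have c3 : (Nat.card H).Coprime r :=
      (Ocoprime_coprime r G).coprime_dvd_left
        (Subgroup.card_dvd_of_le inf_le_right)
    exact (c1.mul_right c2).mul_right c3
  have hgcd : s ∣ Nat.gcd (Nat.card H) (p * q * r) := Nat.dvd_gcd (Nat.minFac_dvd _) hdvd
  rw [Nat.Coprime] at hcop
  rw [hcop] at hgcd
  exact hsp.ne_one (Nat.dvd_one.mp hgcd)
end
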